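/- arXiv:2105.03630 — 6 statements merged into one kernel-verified Lean document; each statement's English description precedes it below -/
import Mathlib

section
/- The angular numerical range W'(C) = {x* C x : x ∈ ℂⁿ, x ≠ 0} of a square complex matrix C is a convex cone in ℂ (viewed as ℝ²): it is closed under addition and under multiplication by positive reals. -/
open Complex

private lemma anr_expand {n : ℕ} (C : Matrix (Fin n) (Fin n) ℂ) (x y : Fin n → ℂ) (s t : ℂ) :
    dotProduct (star (s • x + t • y)) (C.mulVec (s • x + t • y)) =
      (starRingEnd ℂ) s * s * dotProduct (star x) (C.mulVec x)
      + (starRingEnd ℂ) s * t * dotProduct (star x) (C.mulVec y)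
      + (starRingEnd ℂ) t * s * dotProduct (star y) (C.mulVec x)
      + (starRingEnd ℂ) t * t * dotProduct (star y) (C.mulVec y) := by
  simp [Matrix.mulVec_add, Matrix.mulVec_smul, dotProduct_add,
    add_dotProduct, dotProduct_smul, smul_dotProduct,
    star_add, star_smul, smul_eq_mul]
  ring

private lemma anr_scale {n : ℕ} (C : Matrix (Fin n) (Fin n) ℂ) (c : ℂ) (x : Fin n → ℂ) :
    dotProduct (star (c • x)) (C.mulVec (c • x)) =
      (starRingEnd ℂ) c * c * dotProduct (star x) (C.mulVec x) := by
  simp [Matrix.mulVec_smul, dotProduct_smul, smul_dotProduct,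
    star_smul, smul_eq_mul]
  ring

private lemma anr_phase (p q e : ℂ) :
    ∃ u : ℂ, u ≠ 0 ∧ (starRingEnd ℂ) u * u = 1 ∧
      ((u * p + (starRingEnd ℂ) u * q) * (starRingEnd ℂ) e).im = 0 ∧
      0 ≤ ((u * p + (starRingEnd ℂ) u * q) * (starRingEnd ℂ) e).re := by
  set w : ℂ := p * (starRingEnd ℂ) e - (starRingEnd ℂ) q * e with hw
  have key : ∀ u : ℂ, ((u * p + (starRingEnd ℂ) u * q) * (starRingEnd ℂ) e).im = (u * w).im := by
    intro u
    simp only [hw, Complex.add_im, Complex.mul_im, Complex.mul_re, Complex.add_re,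
      Complex.sub_im, Complex.sub_re, Complex.conj_re, Complex.conj_im]
    ring
  obtain ⟨u0, hu0n, hu0w⟩ : ∃ u0 : ℂ, ‖u0‖ = 1 ∧ (u0 * w).im = 0 := by
    by_cases hw0 : w = 0
    · exact ⟨1, by simp, by simp [hw0]⟩
    · refine ⟨(starRingEnd ℂ) w / ‖w‖, ?_, ?_⟩
      · simp [norm_div, hw0]
      · have : (starRingEnd ℂ) w / (‖w‖:ℂ) * w = ((Complex.normSq w / ‖w‖ : ℝ) : ℂ) := by
          push_cast
          rw [div_mul_eq_mul_div, mul_comm, Complex.mul_conj]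
        rw [this]
        simp
  have hconj : ∀ u : ℂ, ‖u‖ = 1 → (starRingEnd ℂ) u * u = 1 := by
    intro u hu
    rw [mul_comm, Complex.mul_conj]
    norm_cast
    rw [Complex.normSq_eq_norm_sq, hu]
    norm_num
  have hne : ∀ u : ℂ, ‖u‖ = 1 → u ≠ 0 := by
    intro u hu h; simp [h] at hu
  by_cases hre : 0 ≤ ((u0 * p + (starRingEnd ℂ) u0 * q) * (starRingEnd ℂ) e).re
  · exact ⟨u0, hne u0 hu0n, hconj u0 hu0n, by rw [key]; exact hu0w, hre⟩
  · refine ⟨-u0, ?_, ?_, ?_, ?_⟩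
    · simpa using hne u0 hu0n
    · simpa using hconj u0 hu0n
    · rw [key]; simp only [neg_mul, Complex.neg_im]; linarith [hu0w]
    · have : ((-u0 * p + (starRingEnd ℂ) (-u0) * q) * (starRingEnd ℂ) e) =
        -((u0 * p + (starRingEnd ℂ) u0 * q) * (starRingEnd ℂ) e) := by
        simp; ring
      rw [this, Complex.neg_re]
      linarith

/-- The angular numerical range is a convex cone: closed under addition and
multiplication by positive reals. -/
theorem angularNumericalRange_convexCone (n : ℕ) (C : Matrix (Fin n) (Fin n) ℂ) :
    (∀ a ∈ {z : ℂ | ∃ x : Fin n → ℂ, x ≠ 0 ∧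
        z = dotProduct (star x) (C.mulVec x)},
     ∀ b ∈ {z : ℂ | ∃ x : Fin n → ℂ, x ≠ 0 ∧
        z = dotProduct (star x) (C.mulVec x)},
      a + b ∈ {z : ℂ | ∃ x : Fin n → ℂ, x ≠ 0 ∧
        z = dotProduct (star x) (C.mulVec x)}) ∧
    (∀ r : ℝ, 0 < r →
      ∀ a ∈ {z : ℂ | ∃ x : Fin n → ℂ, x ≠ 0 ∧
        z = dotProduct (star x) (C.mulVec x)},
      r • a ∈ {z : ℂ | ∃ x : Fin n → ℂ, x ≠ 0 ∧
        z = dotProduct (star x) (C.mulVec x)}) := by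
  have hsmul : ∀ r : ℝ, 0 < r →
      ∀ a ∈ {z : ℂ | ∃ x : Fin n → ℂ, x ≠ 0 ∧
        z = dotProduct (star x) (C.mulVec x)},
      r • a ∈ {z : ℂ | ∃ x : Fin n → ℂ, x ≠ 0 ∧
        z = dotProduct (star x) (C.mulVec x)} := by
    rintro r hr a ⟨x, hx, rfl⟩
    refine ⟨((Real.sqrt r : ℝ) : ℂ) • x, ?_, ?_⟩
    · refine smul_ne_zero ?_ hx
      exact_mod_cast (Real.sqrt_ne_zero'.mpr hr)
    · rw [anr_scale, Complex.real_smul]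
      congr 1
      rw [Complex.conj_ofReal]
      norm_cast
      exact (Real.mul_self_sqrt hr.le).symm
  refine ⟨?_, hsmul⟩
  rintro a ⟨x, hx, ha⟩ b ⟨y, hy, hb⟩
  set p := dotProduct (star x) (C.mulVec y) with hp
  set q := dotProduct (star y) (C.mulVec x) with hq
  by_cases hd : a + b = 0
  · by_cases ha0 : a = 0
    · refine ⟨x, hx, ?_⟩
      rw [hd, ← ha]
      exact ha0.symm
    · -- a ≠ 0, b = -a : find z ≠ 0 with z*Cz = 0
      have hb' : b = -a := by linear_combination hd
      obtain ⟨u, hu0, huu, him, hre⟩ := anr_phase p q a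
      have hcτ : (u * p + (starRingEnd ℂ) u * q) * (starRingEnd ℂ) a =
          (((u * p + (starRingEnd ℂ) u * q) * (starRingEnd ℂ) a).re : ℂ) := by
        apply Complex.ext
        · simp
        · simp [him]
      set τ := ((u * p + (starRingEnd ℂ) u * q) * (starRingEnd ℂ) a).re with hτ
      have hNc : ((Complex.normSq a : ℝ) : ℂ) ≠ 0 := by
        simpa [Complex.normSq_eq_zero] using ha0
      set μ := τ / Complex.normSq a with hμdef
      have hμ0 : 0 ≤ μ := div_nonneg hre (Complex.normSq_nonneg a)
      have hcμ : u * p + (starRingEnd ℂ) u * q = (μ : ℂ) * a := by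
        have h1 : (u * p + (starRingEnd ℂ) u * q) * ((starRingEnd ℂ) a * a) = (τ : ℂ) * a := by
          rw [← mul_assoc, hcτ]
        rw [mul_comm ((starRingEnd ℂ) a) a, Complex.mul_conj] at h1
        rw [hμdef, Complex.ofReal_div, div_mul_eq_mul_div, eq_div_iff hNc]
        linear_combination h1
      set s := (Real.sqrt (μ^2+4) - μ)/2 with hs
      have hsq : Real.sqrt (μ^2+4)^2 = μ^2+4 := Real.sq_sqrt (by positivity)
      have hspos : 0 < s := by
        have h4 : μ < Real.sqrt (μ^2+4) := by nlinarith [Real.sqrt_nonneg (μ^2+4)]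
        rw [hs]; linarith
      have hquad : s^2 + μ*s - 1 = 0 := by rw [hs]; nlinarith [hsq]
      have hquadC : ((s:ℂ))^2 + (μ:ℂ) * (s:ℂ) - 1 = 0 := by exact_mod_cast hquad
      refine ⟨((s:ℝ):ℂ) • x + u • y, ?_, ?_⟩
      · intro h0
        have h1 : u • y = -(((s:ℝ):ℂ) • x) := by
          rw [eq_neg_iff_add_eq_zero, add_comm]; exact h0
        have h2 : y = (-(u⁻¹ * ((s:ℝ):ℂ))) • x := by
          calc y = u⁻¹ • (u • y) := by rw [smul_smul, inv_mul_cancel₀ hu0, one_smul]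
          _ = u⁻¹ • (-(((s:ℝ):ℂ) • x)) := by rw [h1]
          _ = (-(u⁻¹ * ((s:ℝ):ℂ))) • x := by rw [smul_neg, smul_smul, neg_smul]
        have hb2 : b = (starRingEnd ℂ) (-(u⁻¹ * ((s:ℝ):ℂ))) * (-(u⁻¹ * ((s:ℝ):ℂ))) * a := by
          rw [hb, h2, anr_scale, ← ha]
        have hcu : (starRingEnd ℂ) u = u⁻¹ := eq_inv_of_mul_eq_one_left huu
        have hcoef : (starRingEnd ℂ) (-(u⁻¹ * ((s:ℝ):ℂ))) * (-(u⁻¹ * ((s:ℝ):ℂ))) =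
            ((s^2 : ℝ) : ℂ) := by
          rw [map_neg, map_mul, map_inv₀, hcu, Complex.conj_ofReal, inv_inv]
          push_cast
          have huinv : u * u⁻¹ = 1 := mul_inv_cancel₀ hu0
          linear_combination ((s:ℂ))^2 * huinv
        rw [hcoef, hb'] at hb2
        have hfac : (((s^2+1 : ℝ)):ℂ) * a = 0 := by
          push_cast at hb2 ⊢
          linear_combination -hb2
        rcases mul_eq_zero.mp hfac with h | h
        · have : (s^2+1 : ℝ) = 0 := by exact_mod_cast h
          nlinarith
        · exact ha0 h
      · rw [hd, anr_expand, ← ha, ← hb, ← hp, ← hq]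
        rw [Complex.conj_ofReal, hb']
        linear_combination -((s:ℂ)) * hcμ - a * hquadC + a * huu
  · -- a + b ≠ 0
    obtain ⟨u, hu0, huu, him, hre⟩ := anr_phase p q (a + b)
    set c := u * p + (starRingEnd ℂ) u * q with hc
    have hcτ : c * (starRingEnd ℂ) (a+b) = ((c * (starRingEnd ℂ) (a+b)).re : ℂ) := by
      apply Complex.ext
      · rw [Complex.ofReal_re]
      · rw [Complex.ofReal_im]; exact him
    set τ := (c * (starRingEnd ℂ) (a+b)).re with hτ
    set N := Complex.normSq (a+b) with hN
    have hNpos : 0 < N := Complex.normSq_pos.mpr hd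
    have hτpos : 0 < N + τ := by
      have : 0 ≤ τ := hre
      linarith
    have hvτ : (a + b + c) * (starRingEnd ℂ) (a+b) = ((N + τ : ℝ) : ℂ) := by
      rw [add_mul, hcτ, Complex.mul_conj, ← hN]
      push_cast
      ring
    have hNne : ((N:ℝ):ℂ) ≠ 0 := by exact_mod_cast hNpos.ne'
    have hτne : ((N + τ : ℝ):ℂ) ≠ 0 := by exact_mod_cast hτpos.ne'
    have hv : a + b + c = (((N+τ)/N : ℝ) : ℂ) * (a+b) := by
      have h2 : (a+b+c) * ((starRingEnd ℂ) (a+b) * (a+b)) = ((N+τ:ℝ):ℂ) * (a+b) := by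
        rw [← mul_assoc, hvτ]
      rw [mul_comm ((starRingEnd ℂ) (a+b)) (a+b), Complex.mul_conj, ← hN] at h2
      rw [Complex.ofReal_div, div_mul_eq_mul_div, eq_div_iff hNne]
      linear_combination h2
    have hzv : a + b + c = dotProduct (star ((1:ℂ) • x + u • y))
        (C.mulVec ((1:ℂ) • x + u • y)) := by
      rw [anr_expand, ← ha, ← hb, ← hp, ← hq]
      simp only [map_one, one_mul, mul_one]
      rw [huu, one_mul]
      linear_combination hc
    have hzne : (1:ℂ) • x + u • y ≠ 0 := by
      intro h0
      have h1 : a + b + c = 0 := by rw [hzv, h0]; simp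
      rw [h1, zero_mul] at hvτ
      exact hτne hvτ.symm
    have hmem := hsmul (N/(N+τ)) (by positivity) (a+b+c) ⟨_, hzne, hzv⟩
    have key : a + b = (N/(N+τ)) • (a+b+c) := by
      rw [Complex.real_smul, hv]
      have h1 : (N/(N+τ)) * ((N+τ)/N) = 1 := by
        field_simp
      have hone : ((N/(N+τ) : ℝ):ℂ) * (((N+τ)/N : ℝ):ℂ) = 1 := by
        rw [← Complex.ofReal_mul, h1, Complex.ofReal_one]
      rw [← mul_assoc, hone, one_mul]
    rw [key]
    exact hmem
end

section
/- Let α ∈ ℝ and C ∈ ℂ^{n×n}. If there exists ε > 0 such that e^{-iα}C + e^{iα}C* ≥ ε C* C (in the Loewner order), then the range of C and the kernel of C are orthogonal complements, i.e., ker(C) = ker(C*). -/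
open Matrix
open scoped ComplexOrder

/-- If `e^{-iα} C + e^{iα} C* ≥ ε C* C` for some `ε > 0`, then the kernel of `C`
equals the kernel of `C*` (so range and kernel of `C` are orthogonal complements). -/
theorem quasiSectorial_ker_eq (n : ℕ) (α : ℝ) (C : Matrix (Fin n) (Fin n) ℂ)
    (h : ∃ ε : ℝ, 0 < ε ∧
      (Complex.exp (-(α : ℂ) * Complex.I) • C + Complex.exp ((α : ℂ) * Complex.I) • Cᴴ
        - ε • (Cᴴ * C)).PosSemidef) :
    ∀ x : Fin n → ℂ, C.mulVec x = 0 ↔ Cᴴ.mulVec x = 0 := by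
  obtain ⟨ε, hε, hM⟩ := h
  set M := Complex.exp (-(α : ℂ) * Complex.I) • C + Complex.exp ((α : ℂ) * Complex.I) • Cᴴ
        - ε • (Cᴴ * C) with hMdef
  intro x
  constructor
  · intro hCx
    have hMx : M *ᵥ x = Complex.exp ((α : ℂ) * Complex.I) • (Cᴴ *ᵥ x) := by
      simp [hMdef, sub_mulVec, add_mulVec, smul_mulVec, ← mulVec_mulVec, hCx]
    have hq : star x ⬝ᵥ (Cᴴ *ᵥ x) = 0 := by
      have : star (star x ⬝ᵥ (C *ᵥ x)) = star x ⬝ᵥ (Cᴴ *ᵥ x) := by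
        rw [star_dotProduct, star_star, star_mulVec, dotProduct_mulVec]
      rw [← this, hCx]; simp
    have h0 : star x ⬝ᵥ M *ᵥ x = 0 := by
      rw [hMx, dotProduct_smul, hq, smul_zero]
    have := (hM.dotProduct_mulVec_zero_iff x).mp h0
    rw [hMx] at this
    have := smul_eq_zero.mp this
    rcases this with h1 | h1
    · exact absurd h1 (Complex.exp_ne_zero _)
    · exact h1
  · intro hCx
    have hq : star x ⬝ᵥ (C *ᵥ x) = 0 := by
      have : star (star x ⬝ᵥ (Cᴴ *ᵥ x)) = star x ⬝ᵥ (C *ᵥ x) := by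
        rw [star_dotProduct, star_star, star_mulVec, dotProduct_mulVec, conjTranspose_conjTranspose]
      rw [← this, hCx, dotProduct_zero, star_zero]
    have hq2 : star x ⬝ᵥ ((Cᴴ * C) *ᵥ x) = star (C *ᵥ x) ⬝ᵥ (C *ᵥ x) := by
      rw [← mulVec_mulVec, dotProduct_mulVec, star_mulVec]
    have h0 : star x ⬝ᵥ M *ᵥ x = -(ε : ℂ) * (star (C *ᵥ x) ⬝ᵥ (C *ᵥ x)) := by
      simp [hMdef, sub_mulVec, add_mulVec, smul_mulVec, dotProduct_smul, hq, hq2, hCx]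
    have hpos := hM.dotProduct_mulVec_nonneg x
    rw [h0] at hpos
    have hnn : (0:ℂ) ≤ star (C *ᵥ x) ⬝ᵥ (C *ᵥ x) := dotProduct_star_self_nonneg _
    have : star (C *ᵥ x) ⬝ᵥ (C *ᵥ x) = 0 := by
      by_contra hne
      have hlt : (0:ℂ) < star (C *ᵥ x) ⬝ᵥ (C *ᵥ x) := lt_of_le_of_ne hnn (Ne.symm hne)
      have : -(ε:ℂ) * (star (C *ᵥ x) ⬝ᵥ (C *ᵥ x)) < 0 := by
        apply mul_neg_of_neg_of_pos _ hlt
        simpa using hε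
      exact absurd (lt_of_le_of_lt hpos this) (lt_irrefl 0)
    exact dotProduct_star_self_eq_zero.mp this
end

section
/- A matrix C ∈ ℂ^{n×n} satisfies C + C* ≥ ε C* C for some ε > 0 if and only if there exist a unitary U and a matrix C_s ∈ ℂ^{r×r} (r = rank C) with C_s + C_s* > 0 such that C = U · diag(0_{n−r}, C_s) · U*. -/
open Matrix
open scoped ComplexOrder

namespace QSA

lemma smul_posSemidef {r : ℕ} {ε : ℝ} (hε : 0 ≤ ε) {A : Matrix (Fin r) (Fin r) ℂ}
    (hA : A.PosSemidef) : (ε • A).PosSemidef := by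
  refine Matrix.PosSemidef.of_dotProduct_mulVec_nonneg ?_ (fun x => ?_)
  · unfold Matrix.IsHermitian
    rw [Matrix.conjTranspose_smul, star_trivial, hA.1.eq]
  · rw [Matrix.smul_mulVec, dotProduct_smul]
    have := hA.dotProduct_mulVec_nonneg x
    rw [show ε • (star x ⬝ᵥ A *ᵥ x) = (ε : ℂ) * (star x ⬝ᵥ A *ᵥ x) from Complex.real_smul]
    exact mul_nonneg (by exact_mod_cast hε) this

lemma posSemidef_empty {M : Matrix (Fin 0) (Fin 0) ℂ} : M.PosSemidef := by
  refine Matrix.PosSemidef.of_dotProduct_mulVec_nonneg ?_ (fun x => ?_)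
  · ext i j; exact i.elim0
  · simp [dotProduct]

lemma exists_pos_smul_one_le {r : ℕ} {A : Matrix (Fin r) (Fin r) ℂ} (hA : A.PosDef) :
    ∃ δ : ℝ, 0 < δ ∧ (A - δ • 1).PosSemidef := by
  rcases Nat.eq_zero_or_pos r with h0 | h0
  · subst h0; exact ⟨1, one_pos, posSemidef_empty⟩
  haveI : NeZero r := ⟨h0.ne'⟩
  have hH := hA.1
  set δ := Finset.univ.inf' (Finset.univ_nonempty) hH.eigenvalues with hδ
  refine ⟨δ, ?_, ?_⟩
  · rw [Finset.lt_inf'_iff]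
    exact fun i _ => hA.eigenvalues_pos i
  · have hdec : A - δ • 1 =
        (hH.eigenvectorUnitary : Matrix (Fin r) (Fin r) ℂ) *
          Matrix.diagonal (fun i => ((hH.eigenvalues i - δ : ℝ) : ℂ)) *
          (star hH.eigenvectorUnitary : Matrix (Fin r) (Fin r) ℂ) := by
      have hVV : (hH.eigenvectorUnitary : Matrix (Fin r) (Fin r) ℂ) *
          (star hH.eigenvectorUnitary : Matrix (Fin r) (Fin r) ℂ) = 1 :=
        Matrix.mem_unitaryGroup_iff.mp hH.eigenvectorUnitary.2
      have h1 : Matrix.diagonal (fun i => ((hH.eigenvalues i - δ : ℝ) : ℂ)) =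
          Matrix.diagonal (RCLike.ofReal ∘ hH.eigenvalues) - δ • 1 := by
        ext i j
        by_cases h : i = j <;>
          simp [Matrix.diagonal_apply, Matrix.one_apply, h, Matrix.smul_apply,
            Complex.real_smul]
      have hs := hH.spectral_theorem
      rw [Unitary.conjStarAlgAut_apply] at hs
      rw [h1, Matrix.mul_sub, Matrix.sub_mul, ← hs]
      congr 1
      rw [Matrix.mul_smul, Matrix.smul_mul, Matrix.mul_one, hVV]
    rw [hdec]
    exact Matrix.PosSemidef.mul_mul_conjTranspose_same
      (Matrix.posSemidef_diagonal_iff.mpr (fun i => by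
        simp only [Complex.zero_le_real, sub_nonneg]
        exact Finset.inf'_le _ (Finset.mem_univ i))) _

end QSA

namespace QSA2
open QSA

lemma exists_le_smul_one {r : ℕ} {B : Matrix (Fin r) (Fin r) ℂ} (hB : B.PosSemidef) :
    ∃ c : ℝ, 0 < c ∧ (c • 1 - B).PosSemidef := by
  rcases Nat.eq_zero_or_pos r with h0 | h0
  · subst h0; exact ⟨1, one_pos, posSemidef_empty⟩
  haveI : NeZero r := ⟨h0.ne'⟩
  have hH := hB.1
  set c := (∑ i, hH.eigenvalues i) + 1 with hc
  have hcpos : 0 < c := by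
    have : 0 ≤ ∑ i, hH.eigenvalues i :=
      Finset.sum_nonneg fun i _ => hB.eigenvalues_nonneg i
    linarith
  have hle : ∀ i, hH.eigenvalues i ≤ c := by
    intro i
    have h1 : hH.eigenvalues i ≤ ∑ j, hH.eigenvalues j :=
      Finset.single_le_sum (fun j _ => hB.eigenvalues_nonneg j) (Finset.mem_univ i)
    linarith
  refine ⟨c, hcpos, ?_⟩
  have hVV : (hH.eigenvectorUnitary : Matrix (Fin r) (Fin r) ℂ) *
      (star hH.eigenvectorUnitary : Matrix (Fin r) (Fin r) ℂ) = 1 :=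
    Matrix.mem_unitaryGroup_iff.mp hH.eigenvectorUnitary.2
  have hdec : c • 1 - B =
      (hH.eigenvectorUnitary : Matrix (Fin r) (Fin r) ℂ) *
        Matrix.diagonal (fun i => ((c - hH.eigenvalues i : ℝ) : ℂ)) *
        (star hH.eigenvectorUnitary : Matrix (Fin r) (Fin r) ℂ) := by
    have h1 : Matrix.diagonal (fun i => ((c - hH.eigenvalues i : ℝ) : ℂ)) =
        c • 1 - Matrix.diagonal (RCLike.ofReal ∘ hH.eigenvalues) := by
      ext i j
      by_cases h : i = j <;>
        simp [Matrix.diagonal_apply, Matrix.one_apply, h, Matrix.smul_apply, Complex.real_smul]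
    have hs := hH.spectral_theorem
    rw [Unitary.conjStarAlgAut_apply] at hs
    rw [h1, Matrix.mul_sub, Matrix.sub_mul, ← hs]
    congr 1
    rw [Matrix.mul_smul, Matrix.smul_mul, Matrix.mul_one, hVV]
  rw [hdec]
  exact Matrix.PosSemidef.mul_mul_conjTranspose_same
    (Matrix.posSemidef_diagonal_iff.mpr (fun i => by
      simp only [Complex.zero_le_real, sub_nonneg]
      exact hle i)) _

lemma exists_eps {r : ℕ} {A B : Matrix (Fin r) (Fin r) ℂ} (hA : A.PosDef) (hB : B.PosSemidef) :
    ∃ ε : ℝ, 0 < ε ∧ (A - ε • B).PosSemidef := by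
  obtain ⟨δ, hδ, hAδ⟩ := exists_pos_smul_one_le hA
  obtain ⟨c, hc, hBc⟩ := exists_le_smul_one hB
  refine ⟨δ / c, div_pos hδ hc, ?_⟩
  have key : A - (δ / c) • B = (A - δ • 1) + (δ / c) • (c • (1 : Matrix (Fin r) (Fin r) ℂ) - B) := by
    rw [smul_sub, smul_smul, div_mul_cancel₀ _ hc.ne']
    abel
  rw [key]
  exact hAδ.add (smul_posSemidef (le_of_lt (div_pos hδ hc)) hBc)

lemma posSemidef_fromBlocks {m r : ℕ} {M : Matrix (Fin r) (Fin r) ℂ} (hM : M.PosSemidef) :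
    (Matrix.fromBlocks (0 : Matrix (Fin m) (Fin m) ℂ) 0 0 M).PosSemidef := by
  refine Matrix.PosSemidef.of_dotProduct_mulVec_nonneg ?_ (fun x => ?_)
  · unfold Matrix.IsHermitian
    rw [Matrix.fromBlocks_conjTranspose]
    simp [hM.1.eq]
  · have hx : x = Sum.elim (x ∘ Sum.inl) (x ∘ Sum.inr) := by
      funext i; cases i <;> rfl
    have hsx : star x = Sum.elim (star (x ∘ Sum.inl)) (star (x ∘ Sum.inr)) := by
      funext i; cases i <;> rfl
    rw [hsx, hx, Matrix.fromBlocks_mulVec]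
    simp only [Matrix.zero_mulVec, zero_add, add_zero]
    rw [sumElim_dotProduct_sumElim]
    have h2 := hM.dotProduct_mulVec_nonneg (x ∘ Sum.inr)
    simpa using h2

end QSA2


open QSA QSA2 in
set_option maxHeartbeats 2000000 in
/-- A matrix `C` satisfies `C + C* ≥ ε C* C` for some `ε > 0` iff it is unitarily
similar to `diag(0_{n-r}, C_s)` with `r = rank C` and `C_s` strictly accretive. -/
theorem quasiStrictlyAccretive_iff_decomposition (n : ℕ) (C : Matrix (Fin n) (Fin n) ℂ) :
    (∃ ε : ℝ, 0 < ε ∧ (C + Cᴴ - ε • (Cᴴ * C)).PosSemidef) ↔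
    ∃ U : Matrix (Fin n) (Fin n) ℂ, U ∈ Matrix.unitaryGroup (Fin n) ℂ ∧
      ∃ Cs : Matrix (Fin C.rank) (Fin C.rank) ℂ, (Cs + Csᴴ).PosDef ∧
        ∃ e : Fin n ≃ (Fin (n - C.rank) ⊕ Fin C.rank),
          C = U * (Matrix.reindex e.symm e.symm (Matrix.fromBlocks 0 0 0 Cs)) * Uᴴ := by
  constructor
  · intro h
    classical
    obtain ⟨ε, hε, hS⟩ := h
    have hker : ∀ x : Fin n → ℂ, C *ᵥ x = 0 → Cᴴ *ᵥ x = 0 := by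
      intro x hx
      have h1 : (Cᴴ * C) *ᵥ x = 0 := by rw [← Matrix.mulVec_mulVec, hx, Matrix.mulVec_zero]
      have h2 : star x ⬝ᵥ ((C + Cᴴ - ε • (Cᴴ * C)) *ᵥ x) = 0 := by
        rw [Matrix.sub_mulVec, Matrix.add_mulVec, hx, Matrix.smul_mulVec, h1]
        simp only [zero_add, smul_zero, sub_zero]
        rw [Matrix.dotProduct_mulVec, ← Matrix.star_mulVec, hx]
        simp
      have h3 := (hS.dotProduct_mulVec_zero_iff x).mp h2
      have h4 : (C + Cᴴ - ε • (Cᴴ * C)) *ᵥ x = Cᴴ *ᵥ x := by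
        rw [Matrix.sub_mulVec, Matrix.add_mulVec, hx, Matrix.smul_mulVec, h1]
        simp
      rwa [h4] at h3
    set r := C.rank with hr
    have hrn : r ≤ n := by simpa using C.rank_le_card_width
    set g := Matrix.toEuclideanLin C with hg
    set K := LinearMap.ker g with hK
    have hrange : Module.finrank ℂ (LinearMap.range g) = r := by
      rw [hr, Matrix.rank_eq_finrank_range_toLin C (EuclideanSpace.basisFun (Fin n) ℂ).toBasis
        (EuclideanSpace.basisFun (Fin n) ℂ).toBasis]
      rfl
    have hKdim : Module.finrank ℂ K = n - r := by
      have h5 := LinearMap.finrank_range_add_finrank_ker g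
      rw [hrange] at h5
      simp only [finrank_euclideanSpace, Fintype.card_fin] at h5
      show Module.finrank ℂ (LinearMap.ker g) = n - r
      omega
    have hKorth : Module.finrank ℂ (Kᗮ : Submodule ℂ (EuclideanSpace ℂ (Fin n))) = r := by
      have h6 := Submodule.finrank_add_finrank_orthogonal K
      rw [hKdim] at h6
      simp only [finrank_euclideanSpace, Fintype.card_fin] at h6
      omega
    have hmemK : ∀ y : EuclideanSpace ℂ (Fin n), y ∈ K ↔ C *ᵥ (WithLp.equiv 2 _ y) = 0 := by
      intro y
      rw [hK, LinearMap.mem_ker, hg, Matrix.toEuclideanLin_apply]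
      exact ⟨fun hh => by simpa using congrArg (WithLp.equiv 2 (Fin n → ℂ)) hh,
        fun hh => by simp only [WithLp.equiv_apply] at hh; rw [hh]; simp⟩
    have hadj : ∀ y ∈ K, LinearMap.adjoint g y = 0 := by
      intro y hy
      rw [hg, ← Matrix.toEuclideanLin_conjTranspose_eq_adjoint, Matrix.toEuclideanLin_apply]
      rw [hker y.ofLp (by simpa only [WithLp.equiv_apply] using (hmemK y).mp hy)]
      simp
    -- orthonormal bases
    let b0 : OrthonormalBasis (Fin (n - r)) ℂ K := (stdOrthonormalBasis ℂ K).reindex (finCongr hKdim)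
    let b1 : OrthonormalBasis (Fin r) ℂ (Kᗮ : Submodule ℂ (EuclideanSpace ℂ (Fin n))) :=
      (stdOrthonormalBasis ℂ (Kᗮ : Submodule ℂ (EuclideanSpace ℂ (Fin n)))).reindex (finCongr hKorth)
    let v : (Fin (n - r) ⊕ Fin r) → EuclideanSpace ℂ (Fin n) :=
      Sum.elim (fun i => (b0 i : EuclideanSpace ℂ (Fin n))) (fun i => (b1 i : EuclideanSpace ℂ (Fin n)))
    have hv_on : Orthonormal ℂ v := by
      rw [orthonormal_iff_ite]
      rintro (i | i) (j | j)
      · have := orthonormal_iff_ite.mp b0.orthonormal i j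
        simpa [v, Submodule.coe_inner] using this
      · simp only [v, Sum.elim_inl, Sum.elim_inr]
        rw [Submodule.inner_right_of_mem_orthogonal (b0 i).2 (b1 j).2]
        simp
      · simp only [v, Sum.elim_inl, Sum.elim_inr]
        rw [Submodule.inner_left_of_mem_orthogonal (b0 j).2 (b1 i).2]
        simp
      · have := orthonormal_iff_ite.mp b1.orthonormal i j
        simpa [v, Submodule.coe_inner] using this
    have hv_span : ⊤ ≤ Submodule.span ℂ (Set.range v) := by
      rw [show Set.range v = Set.range (K.subtype ∘ b0) ∪
          Set.range ((Kᗮ : Submodule ℂ (EuclideanSpace ℂ (Fin n))).subtype ∘ b1) from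
        Set.Sum.elim_range _ _]
      rw [Submodule.span_union, Set.range_comp, Set.range_comp, Submodule.span_image,
        Submodule.span_image]
      have h0span : Submodule.span ℂ (Set.range (⇑b0)) = ⊤ := by
        rw [← b0.coe_toBasis]; exact b0.toBasis.span_eq
      have h1span : Submodule.span ℂ (Set.range (⇑b1)) = ⊤ := by
        rw [← b1.coe_toBasis]; exact b1.toBasis.span_eq
      rw [h0span, h1span, Submodule.map_subtype_top, Submodule.map_subtype_top,
        Submodule.sup_orthogonal_of_hasOrthogonalProjection]
    let bb : Module.Basis (Fin (n - r) ⊕ Fin r) ℂ (EuclideanSpace ℂ (Fin n)) :=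
      Module.Basis.mk hv_on.linearIndependent hv_span
    have hbbv : ⇑bb = v := Module.Basis.coe_mk _ _
    let b : OrthonormalBasis (Fin (n - r) ⊕ Fin r) ℂ (EuclideanSpace ℂ (Fin n)) :=
      bb.toOrthonormalBasis (by rwa [hbbv])
    have hb : ∀ p, b p = v p := fun p => by
      simp only [b, Module.Basis.coe_toOrthonormalBasis, hbbv]
    have hnn : n = (n - r) + r := by omega
    let e : Fin n ≃ (Fin (n - r) ⊕ Fin r) := (finCongr hnn).trans finSumFinEquiv.symm
    let b' := b.reindex e.symm
    have hb' : ∀ k, b' k = b (e k) := fun k => by simp [b', OrthonormalBasis.reindex_apply]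
    let std := EuclideanSpace.basisFun (Fin n) ℂ
    let U := std.toBasis.toMatrix b'.toBasis
    have hUmem : U ∈ Matrix.unitaryGroup (Fin n) ℂ :=
      std.toMatrix_orthonormalBasis_mem_unitary b'
    let Cs : Matrix (Fin r) (Fin r) ℂ :=
      Matrix.of fun i j => @inner ℂ _ _ (b (Sum.inr i)) (g (b (Sum.inr j)))
    -- membership of b-parts
    have hbinlK : ∀ i, b (Sum.inl i) ∈ K := fun i => by rw [hb]; exact (b0 i).2
    have hbinrK : ∀ i, b (Sum.inr i) ∈ (Kᗮ : Submodule ℂ (EuclideanSpace ℂ (Fin n))) := fun i => by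
      rw [hb]; exact (b1 i).2
    -- matrix identity
    have hCmat : LinearMap.toMatrix std.toBasis std.toBasis g = C := by
      rw [hg, Matrix.toEuclideanLin_eq_toLin_orthonormal]
      exact LinearMap.toMatrix_toLin _ _ _
    have key : U * (LinearMap.toMatrix b'.toBasis b'.toBasis g) *
        (b'.toBasis.toMatrix std.toBasis) = C := by
      rw [basis_toMatrix_mul_linearMap_toMatrix_mul_basis_toMatrix]
      exact hCmat
    have hUH : Uᴴ = b'.toBasis.toMatrix std.toBasis := by
      have h1 : Uᴴ * U = 1 := by
        simpa [Matrix.star_eq_conjTranspose] using Matrix.mem_unitaryGroup_iff'.mp hUmem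
      have h2 : U * (b'.toBasis.toMatrix std.toBasis) = 1 :=
        std.toBasis.toMatrix_mul_toMatrix_flip b'.toBasis
      calc Uᴴ = Uᴴ * (U * (b'.toBasis.toMatrix std.toBasis)) := by rw [h2, Matrix.mul_one]
      _ = (Uᴴ * U) * (b'.toBasis.toMatrix std.toBasis) := by rw [Matrix.mul_assoc]
      _ = b'.toBasis.toMatrix std.toBasis := by rw [h1, Matrix.one_mul]
    have hM : LinearMap.toMatrix b'.toBasis b'.toBasis g =
        Matrix.reindex e.symm e.symm (Matrix.fromBlocks 0 0 0 Cs) := by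
      ext i j
      rw [LinearMap.toMatrix_apply, Matrix.reindex_apply, Matrix.submatrix_apply]
      rw [b'.coe_toBasis, b'.coe_toBasis_repr_apply, b'.repr_apply_apply]
      rw [hb' i, hb' j]
      simp only [Equiv.symm_symm]
      rcases hei : e i with p | p <;> rcases hej : e j with q | q
      · have h0 : g (b (Sum.inl q)) = 0 := LinearMap.mem_ker.mp (hbinlK q)
        rw [h0, inner_zero_right]
        simp [Matrix.fromBlocks]
      · rw [← LinearMap.adjoint_inner_left, hadj _ (hbinlK p), inner_zero_left]
        simp [Matrix.fromBlocks]
      · have h0 : g (b (Sum.inl q)) = 0 := LinearMap.mem_ker.mp (hbinlK q)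
        rw [h0, inner_zero_right]
        simp [Matrix.fromBlocks]
      · simp [Matrix.fromBlocks, Cs]
    refine ⟨U, hUmem, Cs, ?_, e, by rw [← key, hM, hUH]⟩
    refine Matrix.PosDef.of_dotProduct_mulVec_pos ?_ ?_
    · exact Matrix.isHermitian_add_transpose_self Cs
    intro x hx
    set y : EuclideanSpace ℂ (Fin n) := ∑ j, x j • b (Sum.inr j) with hy
    set y' : Fin n → ℂ := WithLp.equiv 2 (Fin n → ℂ) y with hy'
    have hyK : y ∈ (Kᗮ : Submodule ℂ (EuclideanSpace ℂ (Fin n))) :=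
      Submodule.sum_smul_mem _ _ (fun j _ => hbinrK j)
    have hCy : C *ᵥ y' ≠ 0 := by
      intro h0
      have hyinK : y ∈ K := (hmemK y).mpr h0
      have hy0 : y = 0 :=
        inner_self_eq_zero.mp ((Submodule.mem_orthogonal K y).mp hyK y hyinK)
      apply hx
      funext i
      have h8 : (inner ℂ (b (Sum.inr i)) y : ℂ) = x i := by
        rw [hy, inner_sum]
        simp only [inner_smul_right]
        rw [Finset.sum_eq_single i]
        · rw [orthonormal_iff_ite.mp b.orthonormal]; simp
        · intro j _ hj
          rw [orthonormal_iff_ite.mp b.orthonormal]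
          simp [(Ne.symm hj)]
        · simp
      rw [hy0, inner_zero_right] at h8
      exact h8.symm
    have hgy : g y = (WithLp.equiv 2 (Fin n → ℂ)).symm (C *ᵥ y') := by
      rw [hg, Matrix.toEuclideanLin_apply]; rfl
    have hz2 : (inner ℂ y (g y) : ℂ) = star y' ⬝ᵥ (C *ᵥ y') := by
      rw [hgy]
      simp only [PiLp.inner_apply, RCLike.inner_apply, dotProduct, Pi.star_apply,
        starRingEnd_apply]
      exact Finset.sum_congr rfl fun i _ => mul_comm _ _
    have hzform : star x ⬝ᵥ (Cs *ᵥ x) = inner ℂ y (g y) := by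
      rw [hy]
      rw [map_sum]
      simp only [_root_.map_smul, sum_inner, inner_sum, inner_smul_left, inner_smul_right]
      simp only [dotProduct, Matrix.mulVec, Pi.star_apply, Matrix.of_apply,
        starRingEnd_apply]
      simp only [Cs, Matrix.of_apply, Finset.mul_sum]
      rw [Finset.sum_comm]
      refine Finset.sum_congr rfl fun j _ => Finset.sum_congr rfl fun i _ => ?_
      ring
    have hcs : star x ⬝ᵥ (Csᴴ *ᵥ x) = star (star x ⬝ᵥ (Cs *ᵥ x)) := by
      rw [Matrix.dotProduct_mulVec, ← Matrix.star_mulVec, Matrix.star_dotProduct]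
    have hermC : star y' ⬝ᵥ (Cᴴ *ᵥ y') = star (star y' ⬝ᵥ (C *ᵥ y')) := by
      rw [Matrix.dotProduct_mulVec, ← Matrix.star_mulVec, Matrix.star_dotProduct]
    have hsplit : star x ⬝ᵥ ((Cs + Csᴴ) *ᵥ x) =
        (star y' ⬝ᵥ (C *ᵥ y')) + star (star y' ⬝ᵥ (C *ᵥ y')) := by
      rw [Matrix.add_mulVec, dotProduct_add, hcs, hzform, hz2]
    have hqq : star y' ⬝ᵥ ((C + Cᴴ - ε • (Cᴴ * C)) *ᵥ y') =
        ((star y' ⬝ᵥ (C *ᵥ y')) + star (star y' ⬝ᵥ (C *ᵥ y'))) -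
          (ε : ℂ) * (star (C *ᵥ y') ⬝ᵥ (C *ᵥ y')) := by
      rw [Matrix.sub_mulVec, Matrix.add_mulVec, dotProduct_sub, dotProduct_add,
        hermC, Matrix.smul_mulVec, dotProduct_smul, ← Matrix.mulVec_mulVec]
      rw [Matrix.dotProduct_mulVec (star y') Cᴴ, ← Matrix.star_mulVec, Complex.real_smul]
    have hq := hS.dotProduct_mulVec_nonneg y'
    rw [hqq] at hq
    rw [hsplit]
    have hquad : 0 < star (C *ᵥ y') ⬝ᵥ (C *ᵥ y') := by
      exact Matrix.dotProduct_star_self_pos_iff.mpr hCy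
    have hpos : 0 < (ε : ℂ) * (star (C *ᵥ y') ⬝ᵥ (C *ᵥ y')) :=
      mul_pos (Complex.zero_lt_real.mpr hε) hquad
    exact lt_of_lt_of_le hpos (sub_nonneg.mp hq)
  · rintro ⟨U, hU, Cs, hCs, e, hC⟩
    obtain ⟨ε, hε, hPSD⟩ := QSA2.exists_eps hCs (Matrix.posSemidef_conjTranspose_mul_self Cs)
    refine ⟨ε, hε, ?_⟩
    set D := (Matrix.reindex e.symm e.symm (Matrix.fromBlocks 0 0 0 Cs) : Matrix (Fin n) (Fin n) ℂ)
      with hD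
    have hUU : Uᴴ * U = 1 := by
      have := Matrix.mem_unitaryGroup_iff'.mp hU
      simpa [Matrix.star_eq_conjTranspose] using this
    have hCH : Cᴴ = U * Dᴴ * Uᴴ := by
      rw [hC]; simp [Matrix.conjTranspose_mul, Matrix.mul_assoc]
    have hCHC : Cᴴ * C = U * (Dᴴ * D) * Uᴴ := by
      calc Cᴴ * C = U * (Dᴴ * ((Uᴴ * U) * (D * Uᴴ))) := by
            rw [hCH, hC]; simp only [Matrix.mul_assoc]
      _ = U * (Dᴴ * D) * Uᴴ := by rw [hUU]; simp only [Matrix.one_mul, Matrix.mul_assoc]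
    have main : C + Cᴴ - ε • (Cᴴ * C) = U * (D + Dᴴ - ε • (Dᴴ * D)) * Uᴴ := by
      have h : U * (D + Dᴴ - ε • (Dᴴ * D)) * Uᴴ =
          U * D * Uᴴ + U * Dᴴ * Uᴴ - ε • (U * (Dᴴ * D) * Uᴴ) := by
        rw [Matrix.mul_sub, Matrix.mul_add, Matrix.sub_mul, Matrix.add_mul, Matrix.mul_smul,
          Matrix.smul_mul]
      rw [h, ← hC, ← hCH, ← hCHC]
    have hblocks : D + Dᴴ - ε • (Dᴴ * D) =
        Matrix.reindex e.symm e.symm (Matrix.fromBlocks 0 0 0 (Cs + Csᴴ - ε • (Csᴴ * Cs))) := by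
      have hfb : (Matrix.fromBlocks (0 : Matrix (Fin (n - C.rank)) (Fin (n - C.rank)) ℂ) 0 0 Cs) +
          (Matrix.fromBlocks (0 : Matrix (Fin (n - C.rank)) (Fin (n - C.rank)) ℂ) 0 0 Cs)ᴴ -
          ε • ((Matrix.fromBlocks (0 : Matrix (Fin (n - C.rank)) (Fin (n - C.rank)) ℂ) 0 0 Cs)ᴴ *
            (Matrix.fromBlocks (0 : Matrix (Fin (n - C.rank)) (Fin (n - C.rank)) ℂ) 0 0 Cs)) =
          Matrix.fromBlocks 0 0 0 (Cs + Csᴴ - ε • (Csᴴ * Cs)) := by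
        simp only [Matrix.fromBlocks_conjTranspose, Matrix.fromBlocks_multiply,
          Matrix.fromBlocks_smul, Matrix.fromBlocks_add, sub_eq_add_neg, Matrix.fromBlocks_neg]
        congr 1 <;> simp
      rw [hD]
      simp only [Matrix.reindex_apply, Matrix.conjTranspose_submatrix,
        Matrix.submatrix_mul_equiv, ← Matrix.submatrix_smul, ← Matrix.submatrix_add,
        ← Matrix.submatrix_sub]
      rw [← hfb]
      simp [Matrix.submatrix_add, Matrix.submatrix_sub, Matrix.submatrix_smul]
    rw [main, hblocks]
    have hPSD2 := (QSA2.posSemidef_fromBlocks (m := n - C.rank) hPSD)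
    have := (hPSD2.submatrix ⇑e).mul_mul_conjTranspose_same U
    simpa [Matrix.reindex_apply] using this
end

section
/- If A ∈ ℂ^{n×n} satisfies A + A* ≥ ε A*A for some ε > 0 (quasi-strictly accretive) and B ∈ ℂ^{n×n} satisfies B + B* ≥ 0 (accretive), then I + AB is nonsingular. -/
open Matrix
open scoped ComplexOrder

/-- Matrix passivity theorem: if `A` is quasi-strictly accretive
(`A + A* ≥ ε A* A` for some `ε > 0`) and `B` is accretive (`B + B* ≥ 0`),
then `I + AB` is nonsingular. -/
theorem passivity_matrix (n : ℕ) (A B : Matrix (Fin n) (Fin n) ℂ)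
    (hA : ∃ ε : ℝ, 0 < ε ∧ (A + Aᴴ - ε • (Aᴴ * A)).PosSemidef)
    (hB : (B + Bᴴ).PosSemidef) :
    IsUnit (1 + A * B) := by
  obtain ⟨ε, hε, hAe⟩ := hA
  rw [← Matrix.mulVec_injective_iff_isUnit]
  have key : ∀ x : Fin n → ℂ, (1 + A * B) *ᵥ x = 0 → x = 0 := by
    intro x hx
    set y : Fin n → ℂ := B *ᵥ x with hy
    have hxy : A *ᵥ y = -x := by
      rw [add_mulVec, one_mulVec, ← mulVec_mulVec] at hx
      rw [hy]
      linear_combination (norm := module) hx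
    have hA2 := hAe.dotProduct_mulVec_nonneg y
    have hB2 := hB.dotProduct_mulVec_nonneg x
    set c : ℂ := star x ⬝ᵥ y with hc
    set d : ℂ := star y ⬝ᵥ x with hd
    set s : ℂ := star x ⬝ᵥ x with hs
    have e1 : star y ⬝ᵥ (A *ᵥ y) = -d := by rw [hxy, dotProduct_neg, hd]
    have e2 : star y ⬝ᵥ (Aᴴ *ᵥ y) = -c := by
      rw [dotProduct_mulVec, ← star_mulVec, hxy]
      simp [hc]
    have e3 : star y ⬝ᵥ ((Aᴴ * A) *ᵥ y) = s := by
      rw [← mulVec_mulVec, dotProduct_mulVec, ← star_mulVec, hxy]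
      simp [hs]
    have e4 : star x ⬝ᵥ (Bᴴ *ᵥ x) = d := by
      rw [dotProduct_mulVec, ← star_mulVec, ← hy, hd]
    have hB2' : (0 : ℂ) ≤ c + d := by
      rwa [add_mulVec, dotProduct_add, e4, ← hy, ← hc] at hB2
    have hA2' : (0 : ℂ) ≤ -d + -c - (ε : ℂ) * s := by
      rwa [sub_mulVec, add_mulVec, dotProduct_sub, dotProduct_add, e1, e2,
        smul_mulVec, dotProduct_smul, e3, Complex.real_smul] at hA2
    have hεs : (ε : ℂ) * s ≤ 0 := by
      have h1 : (ε : ℂ) * s ≤ -d + -c := sub_nonneg.1 hA2'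
      have h2 : -d + -c ≤ 0 := by
        rw [← neg_add]
        exact neg_nonpos.2 (by rwa [add_comm] at hB2')
      exact h1.trans h2
    have hs0 : (0 : ℂ) ≤ s := dotProduct_star_self_nonneg x
    have : (ε : ℂ) * s = 0 := le_antisymm hεs (mul_nonneg (Complex.zero_le_real.2 hε.le) hs0)
    have : s = 0 := by
      rcases mul_eq_zero.1 this with h | h
      · exact absurd h (by simpa using hε.ne')
      · exact h
    exact dotProduct_star_self_eq_zero.1 this
  intro u v huv
  have : (1 + A * B) *ᵥ (u - v) = 0 := by
    rw [mulVec_sub, huv, sub_self]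
  exact sub_eq_zero.1 (key _ this)
end

section
/- If A, B ∈ ℂ^{n×n} are both strictly accretive, i.e., A + A* > 0 and B + B* > 0, then every eigenvalue λ of AB satisfies λ ∉ (−∞, 0], i.e., AB has no eigenvalue on the closed negative real axis; in particular I + AB is nonsingular. -/
open Matrix
open scoped ComplexOrder

/-- If `A` and `B` are strictly accretive, then `AB` has no eigenvalue on the
closed negative real axis `(-∞, 0]`; in particular `I + AB` is nonsingular. -/
theorem strictlyAccretive_product_no_neg_eigenvalue (n : ℕ)
    (A B : Matrix (Fin n) (Fin n) ℂ)
    (hA : (A + Aᴴ).PosDef) (hB : (B + Bᴴ).PosDef) :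
    (∀ μ : ℂ, (∃ x : Fin n → ℂ, x ≠ 0 ∧ (A * B).mulVec x = μ • x) →
      ¬(μ.im = 0 ∧ μ.re ≤ 0)) ∧ IsUnit (1 + A * B) := by
  have main : ∀ μ : ℂ, (∃ x : Fin n → ℂ, x ≠ 0 ∧ (A * B).mulVec x = μ • x) →
      ¬(μ.im = 0 ∧ μ.re ≤ 0) := by
    rintro μ ⟨x, hx, hμ⟩ ⟨him, hre⟩
    set y := B *ᵥ x with hy
    have hp : (0:ℂ) < star x ⬝ᵥ (B + Bᴴ) *ᵥ x := hB.dotProduct_mulVec_pos hx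
    have hyx : star y ⬝ᵥ x = star x ⬝ᵥ Bᴴ *ᵥ x := by
      rw [hy, star_mulVec, ← dotProduct_mulVec]
    have hy0 : y ≠ 0 := by
      intro h
      have hz : star x ⬝ᵥ (B + Bᴴ) *ᵥ x = 0 := by
        rw [add_mulVec, dotProduct_add, ← hyx, ← hy, h]
        simp
      rw [hz] at hp
      exact lt_irrefl _ hp
    have hq : (0:ℂ) < star y ⬝ᵥ (A + Aᴴ) *ᵥ y := hA.dotProduct_mulVec_pos hy0
    have hAy : A *ᵥ y = μ • x := by rw [hy, mulVec_mulVec, hμ]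
    have hconj : (starRingEnd ℂ) μ = μ := Complex.conj_eq_iff_im.2 him
    have h2 : star y ⬝ᵥ Aᴴ *ᵥ y = μ * (star x ⬝ᵥ y) := by
      rw [dotProduct_mulVec, ← star_mulVec, hAy, star_smul, smul_dotProduct]
      simp [hconj, smul_eq_mul]
    have h1 : star y ⬝ᵥ A *ᵥ y = μ * (star y ⬝ᵥ x) := by
      rw [hAy, dotProduct_smul, smul_eq_mul]
    have hq2 : star y ⬝ᵥ (A + Aᴴ) *ᵥ y = μ * (star x ⬝ᵥ (B + Bᴴ) *ᵥ x) := by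
      rw [add_mulVec, dotProduct_add, h1, h2, hyx, add_mulVec, dotProduct_add, ← hy]
      ring
    rw [Complex.lt_def] at hp hq
    obtain ⟨hpre, hpim⟩ := hp
    obtain ⟨hqre, _⟩ := hq
    rw [hq2] at hqre
    simp only [Complex.zero_re, Complex.zero_im, Complex.mul_re] at hqre hpre hpim
    rw [him, ← hpim] at hqre
    simp at hqre
    nlinarith
  refine ⟨main, ?_⟩
  by_contra h
  have hdet : (1 + A * B).det = 0 := by
    rw [Matrix.isUnit_iff_isUnit_det, isUnit_iff_ne_zero, not_not] at h
    exact h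
  obtain ⟨v, hv, hv0⟩ := (Matrix.exists_mulVec_eq_zero_iff).mpr hdet
  have hv1 : (A * B) *ᵥ v = (-1 : ℂ) • v := by
    rw [add_mulVec, one_mulVec] at hv0
    have : (A * B) *ᵥ v = -v := by
      have := hv0
      linear_combination (norm := module) this
    simpa using this
  exact main (-1) ⟨v, hv, hv1⟩ ⟨by simp, by norm_num⟩
end

section
/- Let B ∈ ℂ^{n×n} be strictly accretive and partitioned as B = [[B₁₁, B₁₂],[B₂₁, B₂₂]] with B₁₁ square. Then B₁₁ is strictly accretive (hence invertible), and the Schur complement B₂₂ − B₂₁ B₁₁⁻¹ B₁₂ is strictly accretive. -/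
open Matrix
open scoped ComplexOrder

private lemma quadHerm {n : Type*} [Fintype n] (A : Matrix n n ℂ) (u : n → ℂ) :
    star u ⬝ᵥ Aᴴ *ᵥ u = star (star u ⬝ᵥ A *ᵥ u) := by
  rw [star_dotProduct]
  congr 1
  rw [star_mulVec, conjTranspose_conjTranspose, ← dotProduct_mulVec]

private lemma quadBlock {p q : ℕ} (B : Matrix (Fin p ⊕ Fin q) (Fin p ⊕ Fin q) ℂ)
    (x : Fin p → ℂ) (y : Fin q → ℂ) :
    star (Sum.elim x y) ⬝ᵥ B *ᵥ Sum.elim x y =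
      star x ⬝ᵥ B.toBlocks₁₁ *ᵥ x + star x ⬝ᵥ B.toBlocks₁₂ *ᵥ y +
      (star y ⬝ᵥ B.toBlocks₂₁ *ᵥ x + star y ⬝ᵥ B.toBlocks₂₂ *ᵥ y) := by
  have h1 : star (Sum.elim x y) ∘ Sum.inl = star x := rfl
  have h2 : star (Sum.elim x y) ∘ Sum.inr = star y := rfl
  conv_lhs => rw [← fromBlocks_toBlocks B]
  rw [fromBlocks_mulVec, dotProduct_block]
  simp [h1, h2, dotProduct_add]

/-- For a strictly accretive block matrix `B`, the (1,1) block is strictly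
accretive (hence invertible) and the Schur complement of the (1,1) block is
strictly accretive. -/
theorem schurComplement_strictlyAccretive (p q : ℕ)
    (B : Matrix (Fin p ⊕ Fin q) (Fin p ⊕ Fin q) ℂ)
    (hB : (B + Bᴴ).PosDef) :
    (B.toBlocks₁₁ + B.toBlocks₁₁ᴴ).PosDef ∧ IsUnit B.toBlocks₁₁ ∧
    ((B.toBlocks₂₂ - B.toBlocks₂₁ * B.toBlocks₁₁⁻¹ * B.toBlocks₁₂) +
      (B.toBlocks₂₂ - B.toBlocks₂₁ * B.toBlocks₁₁⁻¹ * B.toBlocks₁₂)ᴴ).PosDef := by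
  have key : ∀ z : (Fin p ⊕ Fin q) → ℂ, z ≠ 0 →
      0 < star z ⬝ᵥ B *ᵥ z + star (star z ⬝ᵥ B *ᵥ z) := by
    intro z hz
    have := hB.dotProduct_mulVec_pos hz
    rwa [add_mulVec, dotProduct_add, quadHerm] at this
  -- Part 1 : the (1,1) block is strictly accretive
  have h11 : (B.toBlocks₁₁ + B.toBlocks₁₁ᴴ).PosDef := by
    refine posDef_iff_dotProduct_mulVec.mpr ⟨?_, ?_⟩
    · exact Matrix.isHermitian_add_transpose_self _
    · intro x hx
      have hz : (Sum.elim x 0 : (Fin p ⊕ Fin q) → ℂ) ≠ 0 := by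
        intro h; apply hx; ext i; exact congrFun h (Sum.inl i)
      have := key (Sum.elim x 0) hz
      rw [quadBlock] at this
      simp only [mulVec_zero, dotProduct_zero, Sum.elim_inr,
        add_zero, zero_add] at this
      rw [add_mulVec, dotProduct_add, quadHerm]
      simpa using this
  -- Part 2 : invertibility of the (1,1) block
  have hUnit : IsUnit B.toBlocks₁₁ := by
    rw [← Matrix.mulVec_injective_iff_isUnit]
    intro a b hab
    by_contra hne
    have hc : a - b ≠ 0 := sub_ne_zero.mpr hne
    have := h11.dotProduct_mulVec_pos hc
    rw [add_mulVec, dotProduct_add, quadHerm] at this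
    have h0 : B.toBlocks₁₁ *ᵥ (a - b) = 0 := by
      rw [mulVec_sub, hab, sub_self]
    rw [h0] at this
    simp at this
  -- Part 3 : the Schur complement is strictly accretive
  refine ⟨h11, hUnit, ?_⟩
  have hinv : B.toBlocks₁₁ * B.toBlocks₁₁⁻¹ = 1 :=
    mul_nonsing_inv _ ((isUnit_iff_isUnit_det _).mp hUnit)
  set S := B.toBlocks₂₂ - B.toBlocks₂₁ * B.toBlocks₁₁⁻¹ * B.toBlocks₁₂ with hS
  refine posDef_iff_dotProduct_mulVec.mpr ⟨?_, ?_⟩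
  · exact Matrix.isHermitian_add_transpose_self _
  · intro y hy
    set x : Fin p → ℂ := -(B.toBlocks₁₁⁻¹ *ᵥ (B.toBlocks₁₂ *ᵥ y)) with hxdef
    have hz : (Sum.elim x y : (Fin p ⊕ Fin q) → ℂ) ≠ 0 := by
      intro h; apply hy; ext i; exact congrFun h (Sum.inr i)
    have hkey := key (Sum.elim x y) hz
    rw [quadBlock] at hkey
    have hB11x : B.toBlocks₁₁ *ᵥ x = -(B.toBlocks₁₂ *ᵥ y) := by
      rw [hxdef, mulVec_neg, mulVec_mulVec, hinv, one_mulVec]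
    have hB21x : B.toBlocks₂₁ *ᵥ x =
        -((B.toBlocks₂₁ * B.toBlocks₁₁⁻¹ * B.toBlocks₁₂) *ᵥ y) := by
      rw [hxdef, mulVec_neg, mulVec_mulVec, mulVec_mulVec]
    rw [hB11x, hB21x] at hkey
    have hSy : star y ⬝ᵥ S *ᵥ y =
        star y ⬝ᵥ B.toBlocks₂₂ *ᵥ y -
        star y ⬝ᵥ (B.toBlocks₂₁ * B.toBlocks₁₁⁻¹ * B.toBlocks₁₂) *ᵥ y := by
      rw [hS, sub_mulVec, dotProduct_sub]
    rw [add_mulVec, dotProduct_add, quadHerm, hSy]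
    simp only [dotProduct_neg, neg_add_cancel, zero_add] at hkey
    convert hkey using 2 <;> ring
end
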